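/- Let h : ℝ → ℝ be convex, let W : ℝ → ℝ be a 1-periodic, even, Lipschitz function with Lipschitz constant 1, and let ε, τ > 0. Suppose y is a global minimizer over ℝ of t ↦ h(t) + ε·W(t/ε) + (1/(2τ))(t − a)² and z is a global minimizer over ℝ of t ↦ h(t) + ε·W(t/ε) + (1/(2τ))(t − y)². If y < a then z ≤ y, and if y > a then z ≥ y. In particular, any discrete trajectory (x_i) defined by choosing x_{i+1} as a global minimizer of x ↦ h(x) + ε·W(x/ε) + (1/(2τ))(x − x_i)², in which all consecutive steps are in a fixed strict direction, is monotone. -/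
import Mathlib


theorem stmt_3 (h : ℝ → ℝ) (hconv : ConvexOn ℝ Set.univ h)
    (W : ℝ → ℝ) (hper : Function.Periodic W 1) (heven : ∀ x : ℝ, W (-x) = W x)
    (hlip : LipschitzWith 1 W)
    (ε τ : ℝ) (hε : 0 < ε) (hτ : 0 < τ)
    (a y z : ℝ)
    (hy : ∀ t : ℝ, h y + ε * W (y / ε) + 1 / (2 * τ) * (y - a) ^ 2 ≤
      h t + ε * W (t / ε) + 1 / (2 * τ) * (t - a) ^ 2)
    (hz : ∀ t : ℝ, h z + ε * W (z / ε) + 1 / (2 * τ) * (z - y) ^ 2 ≤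
      h t + ε * W (t / ε) + 1 / (2 * τ) * (t - y) ^ 2) :
    ((y < a → z ≤ y) ∧ (a < y → y ≤ z)) ∧
    (∀ x : ℕ → ℝ,
      (∀ i : ℕ, ∀ t : ℝ,
        h (x (i + 1)) + ε * W (x (i + 1) / ε) + 1 / (2 * τ) * (x (i + 1) - x i) ^ 2 ≤
          h t + ε * W (t / ε) + 1 / (2 * τ) * (t - x i) ^ 2) →
      ((∀ i : ℕ, x (i + 1) < x i) ∨ (∀ i : ℕ, x i < x (i + 1))) →
      (Antitone x ∨ Monotone x)) := by
  have hτ' : (0:ℝ) < 1 / (2 * τ) := by positivity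
  refine ⟨⟨?_, ?_⟩, ?_⟩
  · intro hya
    by_contra hzy
    push_neg at hzy
    have h1 := hy z
    have h2 := hz y
    nlinarith [mul_pos hτ' (mul_pos (sub_pos.2 hzy) (sub_pos.2 hya))]
  · intro hay
    by_contra hzy
    push_neg at hzy
    have h1 := hy z
    have h2 := hz y
    nlinarith [mul_pos hτ' (mul_pos (sub_pos.2 hzy) (sub_pos.2 hay))]
  · intro x _ hdir
    rcases hdir with hd | hd
    · exact Or.inl (antitone_nat_of_succ_le fun i => (hd i).le)
    · exact Or.inr (monotone_nat_of_le_succ fun i => (hd i).le)
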